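/- Let f : [0,1] → [0,1]² be continuous with f(0) = (0,0) and f(1) = (1,1). Let a, r, s ∈ ℚ with 0 < r < s and cl B(f(a), s) ⊆ (0,1)². Then p'_{a,s} ≤ p_{a,s} < p'_{a,r} ≤ p_{a,r} < a < q_{a,r} ≤ q'_{a,r} < q_{a,s} ≤ q'_{a,s}; in particular, with K_{a,t} = [p'_{a,t}, p_{a,t}] and L_{a,t} = [q_{a,t}, q'_{a,t}], the intervals satisfy K_{a,s} < K_{a,r} < L_{a,r} < L_{a,s}, where X < Y means max X < min Y. -/

import Mathlib

open Set

noncomputable section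

/-- The Euclidean plane. -/
abbrev E2 := EuclideanSpace ℝ (Fin 2)

/-- The point `(x, y)` of the Euclidean plane. -/
def pt (x y : ℝ) : E2 := WithLp.toLp 2 ![x, y]

/-- The closed unit square `[0,1]²`. -/
def unitSq : Set E2 := {p | p 0 ∈ Icc (0:ℝ) 1 ∧ p 1 ∈ Icc (0:ℝ) 1}

/-- The open unit square `(0,1)²`. -/
def openUnitSq : Set E2 := {p | p 0 ∈ Ioo (0:ℝ) 1 ∧ p 1 ∈ Ioo (0:ℝ) 1}

/-- `p_{a,r} = inf{ b ∈ (0,a) ∩ ℚ : f([b,a]) ⊆ B(f(a),r) }`. -/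
def pTime (f : ℝ → E2) (a r : ℝ) : ℝ :=
  sInf {b : ℝ | (∃ q : ℚ, (q:ℝ) = b) ∧ b ∈ Ioo 0 a ∧
    MapsTo f (Icc b a) (Metric.ball (f a) r)}

/-- `q_{a,r} = sup{ b ∈ (a,1) ∩ ℚ : f([a,b]) ⊆ B(f(a),r) }`. -/
def qTime (f : ℝ → E2) (a r : ℝ) : ℝ :=
  sSup {b : ℝ | (∃ q : ℚ, (q:ℝ) = b) ∧ b ∈ Ioo a 1 ∧
    MapsTo f (Icc a b) (Metric.ball (f a) r)}

/-- `p'_{a,r} = sup{ b ∈ (0,a) ∩ ℚ : f(b) ∉ cl B(f(a),r) }`. -/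
def pTime' (f : ℝ → E2) (a r : ℝ) : ℝ :=
  sSup {b : ℝ | (∃ q : ℚ, (q:ℝ) = b) ∧ b ∈ Ioo 0 a ∧
    f b ∉ closure (Metric.ball (f a) r)}

/-- `q'_{a,r} = inf{ b ∈ (a,1) ∩ ℚ : f(b) ∉ cl B(f(a),r) }`. -/
def qTime' (f : ℝ → E2) (a r : ℝ) : ℝ :=
  sInf {b : ℝ | (∃ q : ℚ, (q:ℝ) = b) ∧ b ∈ Ioo a 1 ∧
    f b ∉ closure (Metric.ball (f a) r)}

/-- `K_{a,r} = [p'_{a,r}, p_{a,r}]`. -/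
def Kint (f : ℝ → E2) (a r : ℝ) : Set ℝ := Icc (pTime' f a r) (pTime f a r)

/-- `L_{a,r} = [q_{a,r}, q'_{a,r}]`. -/
def Lint (f : ℝ → E2) (a r : ℝ) : Set ℝ := Icc (qTime f a r) (qTime' f a r)

namespace ExitAux

lemma sInf_reflect {S T : Set ℝ} (h : ∀ b, b ∈ S ↔ 1 - b ∈ T)
    (hne : T.Nonempty) (hbd : BddAbove T) : sInf S = 1 - sSup T := by
  obtain ⟨t, ht⟩ := hne
  have hSne : S.Nonempty := ⟨1 - t, (h (1 - t)).2 (by simpa using ht)⟩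
  refine IsGLB.csInf_eq ⟨?_, ?_⟩ hSne
  · intro b hb
    have h1 : 1 - b ≤ sSup T := le_csSup hbd ((h b).1 hb)
    linarith
  · intro lb hlb
    have : sSup T ≤ 1 - lb := csSup_le ⟨t, ht⟩ fun x hx => by
      have : lb ≤ 1 - x := hlb ((h (1 - x)).2 (by simpa using hx))
      linarith
    linarith

lemma sSup_reflect {S T : Set ℝ} (h : ∀ b, b ∈ S ↔ 1 - b ∈ T)
    (hne : T.Nonempty) (hbd : BddBelow T) : sSup S = 1 - sInf T := by
  obtain ⟨t, ht⟩ := hne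
  have hSne : S.Nonempty := ⟨1 - t, (h (1 - t)).2 (by simpa using ht)⟩
  refine IsLUB.csSup_eq ⟨?_, ?_⟩ hSne
  · intro b hb
    have h1 : sInf T ≤ 1 - b := csInf_le hbd ((h b).1 hb)
    linarith
  · intro ub hub
    have : 1 - ub ≤ sInf T := le_csInf ⟨t, ht⟩ fun x hx => by
      have : 1 - x ≤ ub := hub ((h (1 - x)).2 (by simpa using hx))
      linarith
    linarith

/-- The set whose infimum is `pTime`. -/
def pSet (f : ℝ → E2) (a r : ℝ) : Set ℝ :=
  {b : ℝ | (∃ q : ℚ, (q:ℝ) = b) ∧ b ∈ Ioo 0 a ∧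
    MapsTo f (Icc b a) (Metric.ball (f a) r)}

/-- The set whose supremum is `pTime'`. -/
def pSet' (f : ℝ → E2) (a r : ℝ) : Set ℝ :=
  {b : ℝ | (∃ q : ℚ, (q:ℝ) = b) ∧ b ∈ Ioo 0 a ∧
    f b ∉ closure (Metric.ball (f a) r)}

/-- The set whose supremum is `qTime`. -/
def qSet (f : ℝ → E2) (a r : ℝ) : Set ℝ :=
  {b : ℝ | (∃ q : ℚ, (q:ℝ) = b) ∧ b ∈ Ioo a 1 ∧
    MapsTo f (Icc a b) (Metric.ball (f a) r)}

/-- The set whose infimum is `qTime'`. -/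
def qSet' (f : ℝ → E2) (a r : ℝ) : Set ℝ :=
  {b : ℝ | (∃ q : ℚ, (q:ℝ) = b) ∧ b ∈ Ioo a 1 ∧
    f b ∉ closure (Metric.ball (f a) r)}

variable {f : ℝ → E2} {a : ℝ}

lemma hcont_of (hfc : ContinuousOn f (Icc 0 1)) :
    ∀ x ∈ Icc (0:ℝ) 1, ∀ ε > (0:ℝ), ∃ δ > (0:ℝ), ∀ y ∈ Icc (0:ℝ) 1,
      |y - x| < δ → dist (f y) (f x) < ε := by
  intro x hx ε hε
  have h := hfc x hx
  rw [Metric.continuousWithinAt_iff] at h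
  obtain ⟨δ, hδ, h⟩ := h ε hε
  exact ⟨δ, hδ, fun y hy hyd => h hy (by rwa [Real.dist_eq])⟩

lemma pSet_nonempty (hfc : ContinuousOn f (Icc 0 1)) (ha : a ∈ Ioo (0:ℝ) 1)
    {t : ℝ} (ht : 0 < t) : (pSet f a t).Nonempty := by
  obtain ⟨δ, hδ, h⟩ := hcont_of hfc a ⟨ha.1.le, ha.2.le⟩ t ht
  obtain ⟨q, hq1, hq2⟩ := exists_rat_btwn (show max (a - δ) 0 < a from max_lt (by linarith) ha.1)
  have hq0 : (0:ℝ) < q := (le_max_right _ _).trans_lt hq1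
  have hqδ : a - δ < q := (le_max_left _ _).trans_lt hq1
  refine ⟨q, ⟨q, rfl⟩, ⟨hq0, hq2⟩, fun x hx => ?_⟩
  rw [Metric.mem_ball]
  exact h x ⟨hq0.le.trans hx.1, hx.2.trans ha.2.le⟩
    (by rw [abs_sub_lt_iff]; constructor <;> [linarith [hx.2]; linarith [hx.1]])

lemma pSet'_nonempty (hfc : ContinuousOn f (Icc 0 1)) (ha : a ∈ Ioo (0:ℝ) 1)
    {t : ℝ} (ht : 0 < t) (h0 : f 0 ∉ Metric.closedBall (f a) t) :
    (pSet' f a t).Nonempty := by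
  have hd : t < dist (f 0) (f a) := by
    rw [Metric.mem_closedBall, not_le] at h0; exact h0
  obtain ⟨δ, hδ, h⟩ := hcont_of hfc 0 (left_mem_Icc.2 zero_le_one)
    (dist (f 0) (f a) - t) (by linarith)
  obtain ⟨q, hq1, hq2⟩ := exists_rat_btwn (show (0:ℝ) < min δ a from lt_min hδ ha.1)
  have hqδ : (q:ℝ) < δ := hq2.trans_le (min_le_left _ _)
  have hqa : (q:ℝ) < a := hq2.trans_le (min_le_right _ _)
  refine ⟨q, ⟨q, rfl⟩, ⟨hq1, hqa⟩, ?_⟩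
  rw [closure_ball _ ht.ne']
  intro hmem
  have h1 : dist (f q) (f 0) < dist (f 0) (f a) - t :=
    h q ⟨hq1.le, (hqa.trans ha.2).le⟩ (by rw [abs_sub_lt_iff]; constructor <;> linarith)
  have h2 : dist (f q) (f a) ≤ t := hmem
  have h3 := dist_triangle (f 0) (f q) (f a)
  rw [dist_comm (f 0) (f q)] at h3
  linarith

lemma pside (hfc : ContinuousOn f (Icc 0 1)) (ha : a ∈ Ioo (0:ℝ) 1)
    {r s : ℝ} (hr : 0 < r) (hrs : r < s)
    (h0s : f 0 ∉ Metric.closedBall (f a) s) :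
    sSup (pSet' f a s) ≤ sInf (pSet f a s) ∧
    sInf (pSet f a s) < sSup (pSet' f a r) ∧
    sSup (pSet' f a r) ≤ sInf (pSet f a r) ∧
    sInf (pSet f a r) < a := by
  have hcont := hcont_of hfc
  have haI : a ∈ Icc (0:ℝ) 1 := ⟨ha.1.le, ha.2.le⟩
  have hbddP : ∀ t : ℝ, BddBelow (pSet f a t) := fun t => ⟨0, fun x hx => hx.2.1.1.le⟩
  have hbddP' : ∀ t : ℝ, BddAbove (pSet' f a t) := fun t => ⟨a, fun x hx => hx.2.1.2.le⟩
  have h0r : f 0 ∉ Metric.closedBall (f a) r :=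
    fun h => h0s (Metric.closedBall_subset_closedBall hrs.le h)
  -- generic: p' ≤ p
  have hle : ∀ t : ℝ, 0 < t → (pSet' f a t).Nonempty → sSup (pSet' f a t) ≤ sInf (pSet f a t) := by
    intro t ht hne
    refine csSup_le hne fun b hb => le_csInf (pSet_nonempty hfc ha ht) fun c hc => ?_
    by_contra hlt
    push_neg at hlt
    exact hb.2.2 (subset_closure (hc.2.2 ⟨hlt.le, hb.2.1.2.le⟩))
  -- generic: p < a
  have hplt : ∀ t : ℝ, 0 < t → sInf (pSet f a t) < a := by
    intro t ht
    obtain ⟨b, hb⟩ := pSet_nonempty hfc ha ht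
    exact lt_of_le_of_lt (csInf_le (hbddP t) hb) hb.2.1.2
  -- the exit set E for radius r
  set E : Set ℝ := {x | x ∈ Ioo 0 a ∧ f x ∉ Metric.closedBall (f a) r} with hE
  have hEne : E.Nonempty := by
    obtain ⟨b, hb1, hb2, hb3⟩ := pSet'_nonempty hfc ha hr h0r
    rw [closure_ball _ hr.ne'] at hb3
    exact ⟨b, hb2, hb3⟩
  have hEbdd : BddAbove E := ⟨a, fun x hx => hx.1.2.le⟩
  set τ := sSup E with hτ
  have hτa : τ < a := by
    obtain ⟨δ, hδ, h⟩ := hcont a haI r hr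
    have hub : ∀ x ∈ E, x ≤ a - δ := by
      intro x hx
      by_contra hc
      push_neg at hc
      have : dist (f x) (f a) < r := h x ⟨hx.1.1.le, (hx.1.2.trans ha.2).le⟩
        (by rw [abs_sub_lt_iff]; constructor <;> [linarith [hx.1.2]; linarith])
      exact hx.2 (Metric.mem_closedBall.2 this.le)
    exact lt_of_le_of_lt (csSup_le hEne hub) (by linarith)
  have hτpos : 0 < τ := hEne.elim fun e he => he.1.1.trans_le (le_csSup hEbdd he)
  have hτI : τ ∈ Icc (0:ℝ) 1 := ⟨hτpos.le, (hτa.trans ha.2).le⟩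
  have hin : ∀ x, τ < x → x < a → f x ∈ Metric.closedBall (f a) r := by
    intro x h1 h2
    by_contra hout
    exact absurd (le_csSup hEbdd ⟨⟨hτpos.trans h1, h2⟩, hout⟩) (not_le.2 h1)
  have hfτ : f τ ∈ Metric.closedBall (f a) r := by
    by_contra hout
    have hd : r < dist (f τ) (f a) := by
      rw [Metric.mem_closedBall, not_le] at hout; exact hout
    obtain ⟨δ, hδ, h⟩ := hcont τ hτI (dist (f τ) (f a) - r) (by linarith)
    set t1 := min (τ + δ / 2) ((τ + a) / 2) with ht1
    have ht1τ : τ < t1 := lt_min (by linarith) (by linarith)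
    have ht1a : t1 < a := (min_le_right _ _).trans_lt (by linarith)
    have ht1d : dist (f t1) (f τ) < dist (f τ) (f a) - r :=
      h t1 ⟨(hτpos.trans ht1τ).le, (ht1a.trans ha.2).le⟩
        (by rw [abs_sub_lt_iff]
            constructor
            · have := min_le_left (τ + δ / 2) ((τ + a) / 2); linarith
            · linarith)
    have : f t1 ∈ Metric.closedBall (f a) r := by
      by_contra hc
      exact absurd (le_csSup hEbdd ⟨⟨hτpos.trans ht1τ, ht1a⟩, hc⟩) (not_le.2 ht1τ)
    rw [Metric.mem_closedBall] at this
    have h3 := dist_triangle (f τ) (f t1) (f a)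
    rw [dist_comm (f τ) (f t1)] at h3
    linarith
  -- Step II : sInf (pSet f a s) < τ
  have hstep2 : sInf (pSet f a s) < τ := by
    obtain ⟨δ2, hδ2, h2⟩ := hcont τ hτI (s - r) (by linarith)
    obtain ⟨q, hq1, hq2⟩ := exists_rat_btwn (show max (τ - δ2) 0 < τ from max_lt (by linarith) hτpos)
    have hq0 : (0:ℝ) < q := (le_max_right _ _).trans_lt hq1
    have hqδ : τ - δ2 < q := (le_max_left _ _).trans_lt hq1
    have hqP : (q:ℝ) ∈ pSet f a s := by
      refine ⟨⟨q, rfl⟩, ⟨hq0, hq2.trans hτa⟩, fun x hx => ?_⟩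
      rw [Metric.mem_ball]
      rcases le_or_gt x τ with hxτ | hxτ
      · have hd1 : dist (f x) (f τ) < s - r :=
          h2 x ⟨hq0.le.trans hx.1, hx.2.trans ha.2.le⟩
            (by rw [abs_sub_lt_iff]; constructor <;> [linarith [hx.2, hτa]; linarith [hx.1]])
        have hd2 : dist (f τ) (f a) ≤ r := hfτ
        calc dist (f x) (f a) ≤ dist (f x) (f τ) + dist (f τ) (f a) := dist_triangle _ _ _
          _ < s := by linarith
      · rcases eq_or_lt_of_le hx.2 with heq | hlt
        · rw [heq]; simpa using hr.trans hrs
        · exact lt_of_le_of_lt (hin x hxτ hlt) hrs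
    exact lt_of_le_of_lt (csInf_le (hbddP s) hqP) hq2
  -- Step I : τ ≤ sSup (pSet' f a r)
  have hstep1 : τ ≤ sSup (pSet' f a r) := by
    refine le_of_forall_lt fun c hc => ?_
    obtain ⟨e, heE, hce⟩ := exists_lt_of_lt_csSup hEne hc
    have hd : r < dist (f e) (f a) := by
      have := heE.2; rw [Metric.mem_closedBall, not_le] at this; exact this
    obtain ⟨δ3, hδ3, h3⟩ := hcont e ⟨heE.1.1.le, (heE.1.2.trans ha.2).le⟩
      (dist (f e) (f a) - r) (by linarith)
    obtain ⟨q, hq1, hq2⟩ := exists_rat_btwn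
      (show max c (max 0 (e - δ3)) < e from max_lt hce (max_lt heE.1.1 (by linarith)))
    have hqc : c < q := (le_max_left _ _).trans_lt hq1
    have hq0 : (0:ℝ) < q := ((le_max_left _ _).trans (le_max_right _ _)).trans_lt hq1
    have hqδ : e - δ3 < q := ((le_max_right _ _).trans (le_max_right _ _)).trans_lt hq1
    have hqa : (q:ℝ) < a := hq2.trans heE.1.2
    have hqP' : (q:ℝ) ∈ pSet' f a r := by
      refine ⟨⟨q, rfl⟩, ⟨hq0, hqa⟩, ?_⟩
      rw [closure_ball _ hr.ne']
      intro hmem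
      have hd1 : dist (f q) (f e) < dist (f e) (f a) - r :=
        h3 q ⟨hq0.le, (hqa.trans ha.2).le⟩ (by rw [abs_sub_lt_iff]; constructor <;> linarith)
      have hd2 : dist (f q) (f a) ≤ r := hmem
      have h4 := dist_triangle (f e) (f q) (f a)
      rw [dist_comm (f e) (f q)] at h4
      linarith
    exact hqc.trans_le (le_csSup (hbddP' r) hqP')
  exact ⟨hle s (hr.trans hrs) (pSet'_nonempty hfc ha (hr.trans hrs) h0s),
    hstep2.trans_le hstep1, hle r hr (pSet'_nonempty hfc ha hr h0r), hplt r hr⟩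

lemma rat_sub (b : ℝ) (h : ∃ q : ℚ, (q:ℝ) = b) : ∃ q : ℚ, (q:ℝ) = 1 - b := by
  obtain ⟨q, hq⟩ := h
  exact ⟨1 - q, by push_cast; rw [hq]⟩

lemma mem_pSet_reflect (f : ℝ → E2) (a t b : ℝ) :
    b ∈ pSet (fun x => f (1 - x)) (1 - a) t ↔ (1 - b) ∈ qSet f a t := by
  have hga : (1:ℝ) - (1 - a) = a := by ring
  constructor
  · rintro ⟨hb, ⟨h1, h2⟩, hmap⟩
    refine ⟨rat_sub b hb, ⟨by linarith, by linarith⟩, fun y hy => ?_⟩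
    have := hmap (show 1 - y ∈ Icc b (1 - a) by
      constructor <;> [linarith [hy.2]; linarith [hy.1]])
    simpa [hga, show (1:ℝ) - (1 - y) = y by ring] using this
  · rintro ⟨hb, ⟨h1, h2⟩, hmap⟩
    refine ⟨?_, ⟨by linarith, by linarith⟩, fun y hy => ?_⟩
    · obtain ⟨q, hq⟩ := rat_sub _ hb
      exact ⟨q, by rw [hq]; ring⟩
    · have := hmap (show 1 - y ∈ Icc a (1 - b) by
        constructor <;> [linarith [hy.2]; linarith [hy.1]])
      simpa [hga] using this

lemma mem_pSet'_reflect (f : ℝ → E2) (a t b : ℝ) :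
    b ∈ pSet' (fun x => f (1 - x)) (1 - a) t ↔ (1 - b) ∈ qSet' f a t := by
  have hga : (1:ℝ) - (1 - a) = a := by ring
  constructor
  · rintro ⟨hb, ⟨h1, h2⟩, hnm⟩
    refine ⟨rat_sub b hb, ⟨by linarith, by linarith⟩, fun h => hnm ?_⟩
    simpa [hga] using h
  · rintro ⟨hb, ⟨h1, h2⟩, hnm⟩
    refine ⟨?_, ⟨by linarith, by linarith⟩, fun h => hnm ?_⟩
    · obtain ⟨q, hq⟩ := rat_sub _ hb
      exact ⟨q, by rw [hq]; ring⟩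
    · simpa [hga] using h

end ExitAux

/-- For radii `r < s`, the exit intervals are nested: `K_{a,s} < K_{a,r} < L_{a,r} < L_{a,s}`. -/
theorem exit_intervals_nested (f : ℝ → E2)
    (hfc : ContinuousOn f (Icc 0 1)) (hfm : MapsTo f (Icc 0 1) unitSq)
    (hf0 : f 0 = pt 0 0) (hf1 : f 1 = pt 1 1)
    (a r s : ℚ) (ha : (a:ℝ) ∈ Ioo (0:ℝ) 1) (hr : (0:ℝ) < r) (hrs : (r:ℝ) < s)
    (hball : closure (Metric.ball (f a) s) ⊆ openUnitSq) :
    pTime' f a s ≤ pTime f a s ∧ pTime f a s < pTime' f a r ∧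
    pTime' f a r ≤ pTime f a r ∧ pTime f a r < a ∧
    (a:ℝ) < qTime f a r ∧ qTime f a r ≤ qTime' f a r ∧
    qTime' f a r < qTime f a s ∧ qTime f a s ≤ qTime' f a s := by
  have hs0 : (0:ℝ) < s := hr.trans hrs
  have h0s : f 0 ∉ Metric.closedBall (f (a:ℝ)) (s:ℝ) := by
    intro h
    have h2 : f 0 ∈ openUnitSq := hball (by rwa [closure_ball _ hs0.ne'])
    rw [hf0] at h2
    have h3 := h2.1.1
    simp [pt] at h3
  have h1s : f 1 ∉ Metric.closedBall (f (a:ℝ)) (s:ℝ) := by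
    intro h
    have h2 : f 1 ∈ openUnitSq := hball (by rwa [closure_ball _ hs0.ne'])
    rw [hf1] at h2
    have h3 := h2.1.2
    simp [pt] at h3
  obtain ⟨hA, hB, hC, hD⟩ := ExitAux.pside hfc ha hr hrs h0s
  -- reflected map
  have hgc : ContinuousOn (fun x => f (1 - x)) (Icc 0 1) :=
    hfc.comp ((continuous_const.sub continuous_id).continuousOn)
      (fun x hx => ⟨by linarith [hx.2], by linarith [hx.1]⟩)
  have hga : (1:ℝ) - (a:ℝ) ∈ Ioo (0:ℝ) 1 := ⟨by linarith [ha.2], by linarith [ha.1]⟩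
  have hceq : (fun x => f (1 - x)) (1 - (a:ℝ)) = f (a:ℝ) := by norm_num
  have hg0s : (fun x => f (1 - x)) 0 ∉
      Metric.closedBall ((fun x => f (1 - x)) (1 - (a:ℝ))) (s:ℝ) := by
    rw [hceq]; simpa using h1s
  have hg0r : (fun x => f (1 - x)) 0 ∉
      Metric.closedBall ((fun x => f (1 - x)) (1 - (a:ℝ))) (r:ℝ) :=
    fun h => hg0s (Metric.closedBall_subset_closedBall hrs.le h)
  obtain ⟨hA', hB', hC', hD'⟩ := ExitAux.pside hgc hga hr hrs hg0s
  -- translation of the reflected quantities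
  have hqb : ∀ t : ℝ, BddAbove (ExitAux.qSet f (a:ℝ) t) :=
    fun t => ⟨1, fun x hx => hx.2.1.2.le⟩
  have hq'b : ∀ t : ℝ, BddBelow (ExitAux.qSet' f (a:ℝ) t) :=
    fun t => ⟨(a:ℝ), fun x hx => hx.2.1.1.le⟩
  have hqne : ∀ t : ℝ, 0 < t → (ExitAux.qSet f (a:ℝ) t).Nonempty := by
    intro t ht
    obtain ⟨b, hb⟩ := ExitAux.pSet_nonempty hgc hga ht
    exact ⟨1 - b, (ExitAux.mem_pSet_reflect f (a:ℝ) t b).1 hb⟩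
  have hq'ne : ∀ t : ℝ, 0 < t →
      ((fun x => f (1 - x)) 0 ∉ Metric.closedBall ((fun x => f (1 - x)) (1 - (a:ℝ))) t) →
      (ExitAux.qSet' f (a:ℝ) t).Nonempty := by
    intro t ht h0
    obtain ⟨b, hb⟩ := ExitAux.pSet'_nonempty hgc hga ht h0
    exact ⟨1 - b, (ExitAux.mem_pSet'_reflect f (a:ℝ) t b).1 hb⟩
  have hqeq : ∀ t : ℝ, 0 < t →
      sInf (ExitAux.pSet (fun x => f (1 - x)) (1 - (a:ℝ)) t) =
        1 - sSup (ExitAux.qSet f (a:ℝ) t) := by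
    intro t ht
    exact ExitAux.sInf_reflect (ExitAux.mem_pSet_reflect f (a:ℝ) t) (hqne t ht) (hqb t)
  have hq'eqr : sSup (ExitAux.pSet' (fun x => f (1 - x)) (1 - (a:ℝ)) (r:ℝ)) =
      1 - sInf (ExitAux.qSet' f (a:ℝ) (r:ℝ)) :=
    ExitAux.sSup_reflect (ExitAux.mem_pSet'_reflect f (a:ℝ) (r:ℝ))
      (hq'ne r hr hg0r) (hq'b r)
  have hq'eqs : sSup (ExitAux.pSet' (fun x => f (1 - x)) (1 - (a:ℝ)) (s:ℝ)) =
      1 - sInf (ExitAux.qSet' f (a:ℝ) (s:ℝ)) :=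
    ExitAux.sSup_reflect (ExitAux.mem_pSet'_reflect f (a:ℝ) (s:ℝ))
      (hq'ne s hs0 hg0s) (hq'b s)
  rw [hqeq s hs0, hq'eqs] at hA'
  rw [hqeq s hs0, hq'eqr] at hB'
  rw [hqeq r hr, hq'eqr] at hC'
  rw [hqeq r hr] at hD'
  refine ⟨hA, hB, hC, hD, ?_, ?_, ?_, ?_⟩
  · show (a:ℝ) < sSup (ExitAux.qSet f (a:ℝ) (r:ℝ)); linarith
  · show sSup (ExitAux.qSet f (a:ℝ) (r:ℝ)) ≤ sInf (ExitAux.qSet' f (a:ℝ) (r:ℝ)); linarith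
  · show sInf (ExitAux.qSet' f (a:ℝ) (r:ℝ)) < sSup (ExitAux.qSet f (a:ℝ) (s:ℝ)); linarith
  · show sSup (ExitAux.qSet f (a:ℝ) (s:ℝ)) ≤ sInf (ExitAux.qSet' f (a:ℝ) (s:ℝ)); linarith
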